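/- arXiv:1806.00528 — 4 statements merged into one kernel-verified Lean document; each statement's English description precedes it below -/
import Mathlib

section
/- For a Markov chain M with discount λ ∈ (0,1], the least fixed point of Ψ_λ is indeed a 1-bounded pseudometric: it is symmetric, vanishes on the diagonal, and satisfies the triangle inequality. -/
open Finset

def IsDist {X : Type*} [Fintype X] (μ : X → ℝ) : Prop :=
  (∀ x, 0 ≤ μ x) ∧ ∑ x, μ x = 1

def IsCoupling {X : Type*} [Fintype X] (μ ν : X → ℝ) (ω : X × X → ℝ) : Prop :=
  IsDist ω ∧ (∀ x, ∑ y, ω (x, y) = μ x) ∧ (∀ y, ∑ x, ω (x, y) = ν y)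

noncomputable def kant {X : Type*} [Fintype X] (d : X → X → ℝ) (μ ν : X → ℝ) : ℝ :=
  sInf { c | ∃ ω : X × X → ℝ, IsCoupling μ ν ω ∧ c = ∑ p : X × X, d p.1 p.2 * ω p }

open Classical in
noncomputable def psi {S L : Type*} [Fintype S] (lam : ℝ) (T : S → S → ℝ) (lab : S → L)
    (d : S → S → ℝ) : S → S → ℝ :=
  fun s t => if lab s = lab t then lam * kant d (T s) (T t) else 1

noncomputable def bdist {S L : Type*} [Fintype S] (lam : ℝ) (T : S → S → ℝ) (lab : S → L) :
    S → S → ℝ := fun s t =>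
  sInf { r | ∃ d : S → S → ℝ, (∀ a b, 0 ≤ d a b ∧ d a b ≤ 1) ∧
      (∀ a b, psi lam T lab d a b ≤ d a b) ∧ r = d s t }

def sumT {M N : Type*} (τ : M → M → ℝ) (θ : N → N → ℝ) : M ⊕ N → M ⊕ N → ℝ
  | Sum.inl m, Sum.inl m' => τ m m'
  | Sum.inr n, Sum.inr n' => θ n n'
  | _, _ => 0

def sumL {M N L : Type*} (ℓ : M → L) (α : N → L) : M ⊕ N → L
  | Sum.inl m => ℓ m
  | Sum.inr n => α n

section kantlem
variable {X : Type*} [Fintype X]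

lemma prodCoupling {μ ν : X → ℝ} (hμ : IsDist μ) (hν : IsDist ν) :
    IsCoupling μ ν (fun p => μ p.1 * ν p.2) := by
  refine ⟨⟨fun p => mul_nonneg (hμ.1 _) (hν.1 _), ?_⟩, fun x => ?_, fun y => ?_⟩
  · rw [Fintype.sum_prod_type]
    simp only [← Finset.mul_sum, hν.2, mul_one, hμ.2]
  · simp only [← Finset.mul_sum, hν.2, mul_one]
  · simp only [← Finset.sum_mul, hμ.2, one_mul]

lemma kset_nonempty {e : X → X → ℝ} {μ ν : X → ℝ} (hμ : IsDist μ) (hν : IsDist ν) :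
    Set.Nonempty { c | ∃ ω : X × X → ℝ, IsCoupling μ ν ω ∧ c = ∑ p : X × X, e p.1 p.2 * ω p } :=
  ⟨_, fun p => μ p.1 * ν p.2, prodCoupling hμ hν, rfl⟩

lemma kset_bdd {e : X → X → ℝ} (he : ∀ a b, 0 ≤ e a b) (μ ν : X → ℝ) :
    BddBelow { c | ∃ ω : X × X → ℝ, IsCoupling μ ν ω ∧ c = ∑ p : X × X, e p.1 p.2 * ω p } := by
  refine ⟨0, fun c hc => ?_⟩
  obtain ⟨ω, hω, rfl⟩ := hc
  exact Finset.sum_nonneg fun p _ => mul_nonneg (he _ _) (hω.1.1 p)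

lemma kant_le_cost {e : X → X → ℝ} (he : ∀ a b, 0 ≤ e a b) {μ ν : X → ℝ} {ω : X × X → ℝ}
    (hω : IsCoupling μ ν ω) : kant e μ ν ≤ ∑ p : X × X, e p.1 p.2 * ω p :=
  csInf_le (kset_bdd he μ ν) ⟨ω, hω, rfl⟩

lemma le_kant {e : X → X → ℝ} {μ ν : X → ℝ} (hμ : IsDist μ) (hν : IsDist ν) {a : ℝ}
    (h : ∀ ω : X × X → ℝ, IsCoupling μ ν ω → a ≤ ∑ p : X × X, e p.1 p.2 * ω p) :
    a ≤ kant e μ ν := by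
  refine le_csInf (kset_nonempty hμ hν) ?_
  rintro c ⟨ω, hω, rfl⟩; exact h ω hω

lemma kant_nonneg {e : X → X → ℝ} (he : ∀ a b, 0 ≤ e a b) {μ ν : X → ℝ}
    (hμ : IsDist μ) (hν : IsDist ν) : 0 ≤ kant e μ ν :=
  le_kant hμ hν fun ω hω => Finset.sum_nonneg fun p _ => mul_nonneg (he _ _) (hω.1.1 p)

lemma kant_le_one {e : X → X → ℝ} (he : ∀ a b, 0 ≤ e a b) (he1 : ∀ a b, e a b ≤ 1)
    {μ ν : X → ℝ} (hμ : IsDist μ) (hν : IsDist ν) : kant e μ ν ≤ 1 := by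
  refine le_trans (kant_le_cost he (prodCoupling hμ hν)) ?_
  calc ∑ p : X × X, e p.1 p.2 * (μ p.1 * ν p.2)
      ≤ ∑ p : X × X, 1 * (μ p.1 * ν p.2) := by
        refine Finset.sum_le_sum fun p _ => ?_
        exact mul_le_mul_of_nonneg_right (he1 _ _) (mul_nonneg (hμ.1 _) (hν.1 _))
    _ = 1 := by
        simp only [one_mul]
        rw [Fintype.sum_prod_type]
        simp only [← Finset.mul_sum, hν.2, mul_one, hμ.2]

lemma kant_mono {e e' : X → X → ℝ} (he : ∀ a b, 0 ≤ e a b) (hee : ∀ a b, e a b ≤ e' a b)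
    {μ ν : X → ℝ} (hμ : IsDist μ) (hν : IsDist ν) : kant e μ ν ≤ kant e' μ ν := by
  refine le_csInf (kset_nonempty hμ hν) ?_
  rintro c ⟨ω, hω, rfl⟩
  refine le_trans (kant_le_cost he hω) (Finset.sum_le_sum fun p _ => ?_)
  exact mul_le_mul_of_nonneg_right (hee _ _) (hω.1.1 p)

lemma sum_swap_prod (f : X × X → ℝ) :
    ∑ p : X × X, f (p.2, p.1) = ∑ p : X × X, f p :=
  Equiv.sum_comp (Equiv.prodComm X X) f

lemma kant_refl_le {e : X → X → ℝ} (he : ∀ a b, 0 ≤ e a b) (hd : ∀ x, e x x = 0)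
    {μ : X → ℝ} (hμ : IsDist μ) : kant e μ μ ≤ 0 := by
  classical
  have hc : IsCoupling μ μ (fun p => if p.1 = p.2 then μ p.1 else 0) := by
    refine ⟨⟨fun p => ?_, ?_⟩, fun x => ?_, fun y => ?_⟩
    · dsimp only; split
      · exact hμ.1 _
      · exact le_refl 0
    · rw [Fintype.sum_prod_type]
      simp [hμ.2]
    · simp
    · simp
  refine le_trans (kant_le_cost he hc) (le_of_eq ?_)
  rw [Fintype.sum_prod_type]
  refine Finset.sum_eq_zero fun x _ => Finset.sum_eq_zero fun y _ => ?_
  by_cases h : x = y <;> simp [h, hd]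

lemma kant_swap (e : X → X → ℝ) (μ ν : X → ℝ) :
    kant (fun a b => e b a) μ ν = kant e ν μ := by
  unfold kant
  congr 1
  ext c
  constructor
  · rintro ⟨ω, ⟨⟨h0, h1⟩, h2, h3⟩, rfl⟩
    refine ⟨fun p => ω (p.2, p.1), ⟨⟨fun p => h0 _, ?_⟩, h3, h2⟩, ?_⟩
    · rw [sum_swap_prod ω]; exact h1
    · exact (sum_swap_prod (fun p => e p.2 p.1 * ω p)).symm
  · rintro ⟨ω, ⟨⟨h0, h1⟩, h2, h3⟩, rfl⟩
    refine ⟨fun p => ω (p.2, p.1), ⟨⟨fun p => h0 _, ?_⟩, h3, h2⟩, ?_⟩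
    · rw [sum_swap_prod ω]; exact h1
    · exact (sum_swap_prod (fun p => e p.1 p.2 * ω p)).symm

lemma kant_glue {e : X → X → ℝ} (he : ∀ a b, 0 ≤ e a b)
    (htri : ∀ a b c, e a c ≤ e a b + e b c)
    {μ ν ρ : X → ℝ} (hμ : IsDist μ) (hν : IsDist ν) (hρ : IsDist ρ) :
    kant e μ ρ ≤ kant e μ ν + kant e ν ρ := by
  classical
  have key : ∀ ω₁ : X × X → ℝ, IsCoupling μ ν ω₁ → ∀ ω₂ : X × X → ℝ, IsCoupling ν ρ ω₂ →
      kant e μ ρ ≤ (∑ p : X × X, e p.1 p.2 * ω₁ p) + ∑ p : X × X, e p.1 p.2 * ω₂ p := by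
    intro ω₁ h₁ ω₂ h₂
    set t : X → X → X → ℝ := fun x y z => if ν y = 0 then 0 else ω₁ (x, y) * ω₂ (y, z) / ν y
      with ht
    have ht0 : ∀ x y z, 0 ≤ t x y z := by
      intro x y z
      by_cases hy : ν y = 0
      · simp [ht, hy]
      · simp only [ht, if_neg hy]
        exact div_nonneg (mul_nonneg (h₁.1.1 _) (h₂.1.1 _)) (hν.1 y)
    have hz1 : ∀ x y, ν y = 0 → ω₁ (x, y) = 0 := by
      intro x y hy
      have hsum : ∑ x, ω₁ (x, y) = 0 := (h₁.2.2 y).trans hy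
      exact (Finset.sum_eq_zero_iff_of_nonneg (fun i _ => h₁.1.1 (i, y))).1 hsum x (mem_univ x)
    have hz2 : ∀ y z, ν y = 0 → ω₂ (y, z) = 0 := by
      intro y z hy
      have hsum : ∑ z, ω₂ (y, z) = 0 := (h₂.2.1 y).trans hy
      exact (Finset.sum_eq_zero_iff_of_nonneg (fun i _ => h₂.1.1 (y, i))).1 hsum z (mem_univ z)
    have hsumz : ∀ x y, ∑ z, t x y z = ω₁ (x, y) := by
      intro x y
      by_cases hy : ν y = 0
      · simp [ht, hy, hz1 x y hy]
      · simp only [ht, if_neg hy, div_eq_mul_inv, mul_assoc]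
        rw [← Finset.mul_sum, ← Finset.sum_mul, h₂.2.1 y, mul_inv_cancel₀ hy, mul_one]
    have hsumx : ∀ y z, ∑ x, t x y z = ω₂ (y, z) := by
      intro y z
      by_cases hy : ν y = 0
      · simp [ht, hy, hz2 y z hy]
      · simp only [ht, if_neg hy, div_eq_mul_inv]
        rw [← Finset.sum_mul, ← Finset.sum_mul, h₁.2.2 y, mul_comm (ν y), mul_assoc,
          mul_inv_cancel₀ hy, mul_one]
    set ω : X × X → ℝ := fun p => ∑ y, t p.1 y p.2 with hω
    have hmarg1 : ∀ x, ∑ z, ω (x, z) = μ x := by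
      intro x
      rw [show ∑ z, ω (x, z) = ∑ z, ∑ y, t x y z from rfl, Finset.sum_comm]
      simp only [hsumz]
      exact h₁.2.1 x
    have hmarg2 : ∀ z, ∑ x, ω (x, z) = ρ z := by
      intro z
      rw [show ∑ x, ω (x, z) = ∑ x, ∑ y, t x y z from rfl, Finset.sum_comm]
      simp only [hsumx]
      exact h₂.2.2 z
    have hcoup : IsCoupling μ ρ ω := by
      refine ⟨⟨fun p => Finset.sum_nonneg fun y _ => ht0 _ _ _, ?_⟩, hmarg1, hmarg2⟩
      rw [Fintype.sum_prod_type]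
      calc ∑ x, ∑ z, ω (x, z) = ∑ x, μ x := Finset.sum_congr rfl fun x _ => hmarg1 x
        _ = 1 := hμ.2
    have hcost : ∑ p : X × X, e p.1 p.2 * ω p
        ≤ (∑ p : X × X, e p.1 p.2 * ω₁ p) + ∑ p : X × X, e p.1 p.2 * ω₂ p := by
      have step1 : ∑ p : X × X, e p.1 p.2 * ω p = ∑ x, ∑ z, ∑ y, e x z * t x y z := by
        rw [Fintype.sum_prod_type]
        exact Finset.sum_congr rfl fun x _ => Finset.sum_congr rfl fun z _ => Finset.mul_sum _ _ _
      have step2 : ∑ x, ∑ z, ∑ y, e x z * t x y z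
          ≤ ∑ x, ∑ z, ∑ y, (e x y + e y z) * t x y z := by
        refine Finset.sum_le_sum fun x _ => Finset.sum_le_sum fun z _ =>
          Finset.sum_le_sum fun y _ => ?_
        exact mul_le_mul_of_nonneg_right (htri x y z) (ht0 x y z)
      have step3 : ∑ x, ∑ z, ∑ y, (e x y + e y z) * t x y z
          = (∑ x, ∑ z, ∑ y, e x y * t x y z) + ∑ x, ∑ z, ∑ y, e y z * t x y z := by
        simp only [add_mul, Finset.sum_add_distrib]
      have stepA : ∑ x, ∑ z, ∑ y, e x y * t x y z = ∑ p : X × X, e p.1 p.2 * ω₁ p := by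
        rw [Fintype.sum_prod_type]
        refine Finset.sum_congr rfl fun x _ => ?_
        rw [Finset.sum_comm]
        refine Finset.sum_congr rfl fun y _ => ?_
        rw [← Finset.mul_sum, hsumz]
      have stepB : ∑ x, ∑ z, ∑ y, e y z * t x y z = ∑ p : X × X, e p.1 p.2 * ω₂ p := by
        have h1 : ∀ z y, ∑ x, e y z * t x y z = e y z * ω₂ (y, z) := fun z y => by
          rw [← Finset.mul_sum, hsumx]
        calc ∑ x, ∑ z, ∑ y, e y z * t x y z
            = ∑ z, ∑ x, ∑ y, e y z * t x y z := Finset.sum_comm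
          _ = ∑ z, ∑ y, ∑ x, e y z * t x y z := Finset.sum_congr rfl fun z _ => Finset.sum_comm
          _ = ∑ z, ∑ y, e y z * ω₂ (y, z) := by simp only [h1]
          _ = ∑ y, ∑ z, e y z * ω₂ (y, z) := Finset.sum_comm
          _ = ∑ p : X × X, e p.1 p.2 * ω₂ p := by rw [Fintype.sum_prod_type]
      calc ∑ p : X × X, e p.1 p.2 * ω p = ∑ x, ∑ z, ∑ y, e x z * t x y z := step1
        _ ≤ _ := step2
        _ = _ := step3
        _ = _ := by rw [stepA, stepB]
    exact le_trans (kant_le_cost he hcoup) hcost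
  have h1 : kant e μ ρ - kant e ν ρ ≤ kant e μ ν := by
    refine le_kant hμ hν fun ω₁ h₁ => ?_
    have h2 : kant e μ ρ - (∑ p : X × X, e p.1 p.2 * ω₁ p) ≤ kant e ν ρ := by
      refine le_kant hν hρ fun ω₂ h₂ => ?_
      have := key ω₁ h₁ ω₂ h₂
      linarith
    linarith
  linarith

end kantlem

section psilem
variable {M L : Type*} [Fintype M] {lam : ℝ} {τ : M → M → ℝ} {ℓ : M → L}

lemma psi_nonneg (hlam : 0 < lam) (hτ : ∀ m, IsDist (τ m)) {e : M → M → ℝ}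
    (he : ∀ a b, 0 ≤ e a b) (a b : M) : 0 ≤ psi lam τ ℓ e a b := by
  unfold psi
  split
  · exact mul_nonneg hlam.le (kant_nonneg he (hτ a) (hτ b))
  · exact zero_le_one

lemma psi_le_one (hlam : 0 < lam) (hlam1 : lam ≤ 1) (hτ : ∀ m, IsDist (τ m)) {e : M → M → ℝ}
    (he : ∀ a b, 0 ≤ e a b) (he1 : ∀ a b, e a b ≤ 1) (a b : M) : psi lam τ ℓ e a b ≤ 1 := by
  unfold psi
  split
  · calc lam * kant e (τ a) (τ b) ≤ 1 * 1 :=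
        mul_le_mul hlam1 (kant_le_one he he1 (hτ a) (hτ b)) (kant_nonneg he (hτ a) (hτ b))
          zero_le_one
      _ = 1 := one_mul 1
  · exact le_refl 1

lemma psi_mono (hlam : 0 < lam) (hτ : ∀ m, IsDist (τ m)) {e e' : M → M → ℝ}
    (he : ∀ a b, 0 ≤ e a b) (hee : ∀ a b, e a b ≤ e' a b) (a b : M) :
    psi lam τ ℓ e a b ≤ psi lam τ ℓ e' a b := by
  unfold psi
  split
  · exact mul_le_mul_of_nonneg_left (kant_mono he hee (hτ a) (hτ b)) hlam.le
  · exact le_refl 1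

lemma psi_triangle (hlam : 0 < lam) (hlam1 : lam ≤ 1) (hτ : ∀ m, IsDist (τ m)) {e : M → M → ℝ}
    (he : ∀ a b, 0 ≤ e a b) (he1 : ∀ a b, e a b ≤ 1)
    (htri : ∀ a b c, e a c ≤ e a b + e b c) (m n p : M) :
    psi lam τ ℓ e m p ≤ psi lam τ ℓ e m n + psi lam τ ℓ e n p := by
  have hk0 : ∀ a b : M, 0 ≤ psi lam τ ℓ e a b := psi_nonneg hlam hτ he
  have hk1 : ∀ a b : M, psi lam τ ℓ e a b ≤ 1 := psi_le_one hlam hlam1 hτ he he1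
  unfold psi
  by_cases hmp : ℓ m = ℓ p
  · by_cases hmn : ℓ m = ℓ n
    · have hnp : ℓ n = ℓ p := hmn ▸ hmp
      rw [if_pos hmp, if_pos hmn, if_pos hnp, ← mul_add]
      exact mul_le_mul_of_nonneg_left
        (kant_glue he htri (hτ m) (hτ n) (hτ p)) hlam.le
    · have hnp : ¬ ℓ n = ℓ p := fun h => hmn (hmp.trans h.symm)
      rw [if_pos hmp, if_neg hmn, if_neg hnp]
      have := hk1 m p
      unfold psi at this
      rw [if_pos hmp] at this
      linarith
  · by_cases hmn : ℓ m = ℓ n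
    · have hnp : ¬ ℓ n = ℓ p := fun h => hmp (hmn.trans h)
      rw [if_neg hmp, if_pos hmn, if_neg hnp]
      have h0 : 0 ≤ lam * kant e (τ m) (τ n) :=
        mul_nonneg hlam.le (kant_nonneg he (hτ m) (hτ n))
      linarith
    · rw [if_neg hmp, if_neg hmn]
      have h0 : 0 ≤ psi lam τ ℓ e n p := hk0 n p
      unfold psi at h0
      linarith

end psilem

/-- chain cost along a path -/
def chainCost {M : Type*} (d : M → M → ℝ) : M → List M → M → ℝ
  | m, [], p => d m p
  | m, n :: l, p => d m n + chainCost d n l p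

lemma chainCost_nonneg {M : Type*} {d : M → M → ℝ} (hd : ∀ a b, 0 ≤ d a b) :
    ∀ (l : List M) (m p : M), 0 ≤ chainCost d m l p := by
  intro l
  induction l with
  | nil => intro m p; exact hd m p
  | cons n l ih => intro m p; exact add_nonneg (hd m n) (ih n p)

lemma chainCost_append {M : Type*} (d : M → M → ℝ) :
    ∀ (l₁ : List M) (m n : M) (l₂ : List M) (p : M),
      chainCost d m (l₁ ++ n :: l₂) p = chainCost d m l₁ n + chainCost d n l₂ p := by
  intro l₁
  induction l₁ with
  | nil => intro m n l₂ p; simp [chainCost]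
  | cons a l ih => intro m n l₂ p; simp [chainCost, ih a n l₂ p, add_assoc]

theorem stmt6 {M L : Type*} [Fintype M] [Nonempty M]
    (lam : ℝ) (hlam : 0 < lam ∧ lam ≤ 1)
    (τ : M → M → ℝ) (hτ : ∀ m, IsDist (τ m)) (ℓ : M → L)
    (d : M → M → ℝ)
    (hb : ∀ a b, 0 ≤ d a b ∧ d a b ≤ 1)
    (hfix : psi lam τ ℓ d = d)
    (hleast : ∀ d' : M → M → ℝ, (∀ a b, 0 ≤ d' a b ∧ d' a b ≤ 1) →
        psi lam τ ℓ d' = d' → ∀ a b, d a b ≤ d' a b) :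
    (∀ m, d m m = 0) ∧ (∀ m n, d m n = d n m) ∧ (∀ m n p, d m p ≤ d m n + d n p) := by
  classical
  obtain ⟨hlam0, hlam1⟩ := hlam
  have hd0 : ∀ a b, 0 ≤ d a b := fun a b => (hb a b).1
  have hd1 : ∀ a b, d a b ≤ 1 := fun a b => (hb a b).2
  -- Tarski: d is below every bounded prefixed point
  have below : ∀ e : M → M → ℝ, (∀ a b, 0 ≤ e a b) → (∀ a b, e a b ≤ 1) →
      (∀ a b, psi lam τ ℓ e a b ≤ e a b) → ∀ a b, d a b ≤ e a b := by
    intro e he0 he1 hpre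
    set S : Set (M → M → ℝ) :=
      { f | (∀ a b, 0 ≤ f a b ∧ f a b ≤ e a b) ∧ ∀ a b, psi lam τ ℓ f a b ≤ f a b } with hS
    have heS : e ∈ S := ⟨fun a b => ⟨he0 a b, le_refl _⟩, hpre⟩
    set g : M → M → ℝ := fun a b => sInf { r | ∃ f ∈ S, r = f a b } with hg
    have hne : ∀ a b, Set.Nonempty { r | ∃ f ∈ S, r = f a b } :=
      fun a b => ⟨e a b, e, heS, rfl⟩
    have hbdd : ∀ a b, BddBelow { r | ∃ f ∈ S, r = f a b } := by
      rintro a b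
      refine ⟨0, ?_⟩
      rintro r ⟨f, hf, rfl⟩
      exact (hf.1 a b).1
    have hg0 : ∀ a b, 0 ≤ g a b := by
      intro a b
      refine le_csInf (hne a b) ?_
      rintro r ⟨f, hf, rfl⟩
      exact (hf.1 a b).1
    have hgle : ∀ f ∈ S, ∀ a b, g a b ≤ f a b :=
      fun f hf a b => csInf_le (hbdd a b) ⟨f, hf, rfl⟩
    have hge : ∀ a b, g a b ≤ e a b := hgle e heS
    have hpsig : ∀ a b, psi lam τ ℓ g a b ≤ g a b := by
      intro a b
      refine le_csInf (hne a b) ?_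
      rintro r ⟨f, hf, rfl⟩
      exact le_trans (psi_mono hlam0 hτ hg0 (hgle f hf) a b) (hf.2 a b)
    have hpsigS : psi lam τ ℓ g ∈ S := by
      refine ⟨fun a b => ⟨psi_nonneg hlam0 hτ hg0 a b, ?_⟩, fun a b => ?_⟩
      · exact le_trans (psi_mono hlam0 hτ hg0 hge a b) (hpre a b)
      · exact psi_mono hlam0 hτ (psi_nonneg hlam0 hτ hg0) hpsig a b
    have hgfix : psi lam τ ℓ g = g := by
      funext a b
      exact le_antisymm (hpsig a b) (hgle _ hpsigS a b)
    have hgb : ∀ a b, 0 ≤ g a b ∧ g a b ≤ 1 :=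
      fun a b => ⟨hg0 a b, le_trans (hge a b) (he1 a b)⟩
    intro a b
    exact le_trans (hleast g hgb hgfix a b) (hge a b)
  -- Part 1: diagonal
  have part1 : ∀ m, d m m = 0 := by
    have he0 : ∀ a b : M, (0 : ℝ) ≤ if a = b then 0 else d a b := by
      intro a b; split
      · exact le_refl 0
      · exact hd0 a b
    set e : M → M → ℝ := fun a b => if a = b then 0 else d a b with heq
    have hee : ∀ a b, e a b ≤ d a b := by
      intro a b
      simp only [heq]
      split
      · next h => subst h; exact hd0 a a
      · exact le_refl _
    have hediag : ∀ a, e a a = 0 := by intro a; simp [heq]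
    have hpre : ∀ a b, psi lam τ ℓ e a b ≤ e a b := by
      intro a b
      by_cases hab : a = b
      · subst hab
        rw [hediag a]
        unfold psi
        rw [if_pos rfl]
        have hk := kant_refl_le he0 hediag (hτ a)
        have := mul_le_mul_of_nonneg_left hk hlam0.le
        simpa using this
      · have h1 : psi lam τ ℓ e a b ≤ psi lam τ ℓ d a b := psi_mono hlam0 hτ he0 hee a b
        rw [hfix] at h1
        have h2 : e a b = d a b := by simp [heq, hab]
        rw [h2]; exact h1
    intro m
    have h := below e he0 (fun a b => le_trans (hee a b) (hd1 a b)) hpre m m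
    rw [hediag m] at h
    exact le_antisymm h (hd0 m m)
  -- Part 2: symmetry
  have part2 : ∀ m n, d m n = d n m := by
    have hfixT : psi lam τ ℓ (fun a b => d b a) = fun a b => d b a := by
      funext a b
      unfold psi
      rw [kant_swap d (τ a) (τ b)]
      by_cases hab : ℓ a = ℓ b
      · rw [if_pos hab]
        have := congrFun (congrFun hfix b) a
        unfold psi at this
        rw [if_pos hab.symm] at this
        exact this
      · rw [if_neg hab]
        have := congrFun (congrFun hfix b) a
        unfold psi at this
        rw [if_neg (fun h => hab h.symm)] at this
        exact this
    have h := hleast (fun a b => d b a) (fun a b => ⟨hd0 b a, hd1 b a⟩) hfixT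
    exact fun m n => le_antisymm (h m n) (h n m)
  -- Part 3: triangle inequality
  have part3 : ∀ m n p, d m p ≤ d m n + d n p := by
    set e : M → M → ℝ := fun m p => sInf { c | ∃ l : List M, c = chainCost d m l p } with heq
    have hne : ∀ m p, Set.Nonempty { c | ∃ l : List M, c = chainCost d m l p } :=
      fun m p => ⟨d m p, [], rfl⟩
    have hbdd : ∀ m p, BddBelow { c | ∃ l : List M, c = chainCost d m l p } := by
      intro m p
      refine ⟨0, ?_⟩
      rintro c ⟨l, rfl⟩
      exact chainCost_nonneg hd0 l m p
    have he0 : ∀ m p, 0 ≤ e m p := by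
      intro m p
      refine le_csInf (hne m p) ?_
      rintro c ⟨l, rfl⟩
      exact chainCost_nonneg hd0 l m p
    have heled : ∀ m p, e m p ≤ d m p := fun m p => csInf_le (hbdd m p) ⟨[], rfl⟩
    have he1 : ∀ m p, e m p ≤ 1 := fun m p => le_trans (heled m p) (hd1 m p)
    have hechain : ∀ m p (l : List M), e m p ≤ chainCost d m l p :=
      fun m p l => csInf_le (hbdd m p) ⟨l, rfl⟩
    have htri : ∀ m n p, e m p ≤ e m n + e n p := by
      intro m n p
      have h1 : e m p - e n p ≤ e m n := by
        refine le_csInf (hne m n) ?_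
        rintro c ⟨l₁, rfl⟩
        have h2 : e m p - chainCost d m l₁ n ≤ e n p := by
          refine le_csInf (hne n p) ?_
          rintro c ⟨l₂, rfl⟩
          have := hechain m p (l₁ ++ n :: l₂)
          rw [chainCost_append d l₁ m n l₂ p] at this
          linarith
        linarith
      linarith
    have hpre : ∀ m p, psi lam τ ℓ e m p ≤ e m p := by
      intro m p
      refine le_csInf (hne m p) ?_
      rintro c ⟨l, rfl⟩
      induction l generalizing m with
      | nil =>
        have h1 : psi lam τ ℓ e m p ≤ psi lam τ ℓ d m p := psi_mono hlam0 hτ he0 heled m p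
        rw [hfix] at h1
        exact h1
      | cons n l ih =>
        have h1 : psi lam τ ℓ e m p ≤ psi lam τ ℓ e m n + psi lam τ ℓ e n p :=
          psi_triangle hlam0 hlam1 hτ he0 he1 htri m n p
        have h2 : psi lam τ ℓ e m n ≤ d m n := by
          have h2' : psi lam τ ℓ e m n ≤ psi lam τ ℓ d m n := psi_mono hlam0 hτ he0 heled m n
          rw [hfix] at h2'
          exact h2' 
        have h3 : psi lam τ ℓ e n p ≤ chainCost d n l p := ih n
        show psi lam τ ℓ e m p ≤ d m n + chainCost d n l p
        linarith
    intro m n p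
    have h := below e he0 he1 hpre m p
    exact le_trans h (hechain m p [n])
  exact ⟨part1, part2, part3⟩
end

section
/- For states m of a Markov chain M and n of a Markov chain N (considered in the disjoint union), the λ-discounted bisimilarity distance satisfies d_λ(m,n) ≥ λ · τ(m)({u ∈ M : ℓ(u) ∉ L(N)}), where L(N) is the set of labels occurring in N. -/
open Finset

lemma prod_coupling {X : Type*} [Fintype X] {μ ν : X → ℝ} (hμ : IsDist μ) (hν : IsDist ν) :
    IsCoupling μ ν (fun p => μ p.1 * ν p.2) := by
  refine ⟨⟨fun p => mul_nonneg (hμ.1 _) (hν.1 _), ?_⟩, fun x => ?_, fun y => ?_⟩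
  · rw [Fintype.sum_prod_type]
    simp only [← Finset.sum_mul, ← Finset.mul_sum, hμ.2, hν.2, one_mul]
  · simp [← Finset.mul_sum, hν.2]
  · simp [← Finset.sum_mul, hμ.2]

lemma kant_one {X : Type*} [Fintype X] {μ ν : X → ℝ} (hμ : IsDist μ) (hν : IsDist ν) :
    kant (fun _ _ => (1 : ℝ)) μ ν = 1 := by
  have hset : { c | ∃ ω : X × X → ℝ, IsCoupling μ ν ω ∧
      c = ∑ p : X × X, (fun _ _ => (1:ℝ)) p.1 p.2 * ω p } = {1} := by
    ext c
    simp only [Set.mem_setOf_eq, Set.mem_singleton_iff]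
    constructor
    · rintro ⟨ω, hω, rfl⟩
      simpa [hω.1.2] using (hω.1.2)
    · rintro rfl
      exact ⟨fun p => μ p.1 * ν p.2, prod_coupling hμ hν, by
        simp [(prod_coupling hμ hν).1.2]⟩
  rw [kant, hset, csInf_singleton]

lemma sumT_dist_inl {M N : Type*} [Fintype M] [Fintype N] {τ : M → M → ℝ} {θ : N → N → ℝ}
    (hτ : ∀ m, IsDist (τ m)) (m : M) : IsDist (sumT τ θ (Sum.inl m)) := by
  constructor
  · rintro (u | v)
    · exact (hτ m).1 u
    · exact le_refl 0
  · rw [Fintype.sum_sum_type]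
    simpa [sumT] using (hτ m).2

lemma sumT_dist_inr {M N : Type*} [Fintype M] [Fintype N] {τ : M → M → ℝ} {θ : N → N → ℝ}
    (hθ : ∀ n, IsDist (θ n)) (n : N) : IsDist (sumT τ θ (Sum.inr n)) := by
  constructor
  · rintro (u | v)
    · exact le_refl 0
    · exact (hθ n).1 v
  · rw [Fintype.sum_sum_type]
    simpa [sumT] using (hθ n).2

theorem stmt9 {M N L : Type*} [Fintype M] [Nonempty M] [Fintype N] [Nonempty N]
    (lam : ℝ) (hlam : 0 < lam ∧ lam ≤ 1)
    (τ : M → M → ℝ) (hτ : ∀ m, IsDist (τ m)) (ℓ : M → L)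
    (θ : N → N → ℝ) (hθ : ∀ n, IsDist (θ n)) (α : N → L)
    (m : M) (n : N) :
    lam * ∑ u : M, Set.indicator {u : M | ℓ u ∉ Set.range α} (τ m) u
      ≤ bdist lam (sumT τ θ) (sumL ℓ α) (Sum.inl m) (Sum.inr n) := by
  classical
  set T := sumT τ θ with hT
  set lab := sumL ℓ α with hlab
  set S0 : ℝ := ∑ u : M, Set.indicator {u : M | ℓ u ∉ Set.range α} (τ m) u with hS0
  have hind : ∀ u : M, Set.indicator {u : M | ℓ u ∉ Set.range α} (τ m) u =
      if ℓ u ∉ Set.range α then τ m u else 0 := by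
    intro u; rw [Set.indicator_apply]; simp [Set.mem_setOf_eq]
  have hS0nonneg : 0 ≤ S0 := by
    apply Finset.sum_nonneg
    intro u _
    rw [hind]
    split <;> [exact (hτ m).1 u; exact le_refl 0]
  have hS0le : S0 ≤ 1 := by
    calc S0 ≤ ∑ u : M, τ m u := by
          apply Finset.sum_le_sum
          intro u _
          rw [hind]
          split <;> [exact le_refl _; exact (hτ m).1 u]
      _ = 1 := (hτ m).2
  have hTm : IsDist (T (Sum.inl m)) := sumT_dist_inl hτ m
  have hTn : IsDist (T (Sum.inr n)) := sumT_dist_inr hθ n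
  apply le_csInf
  · -- nonempty: d ≡ 1
    refine ⟨1, fun _ _ => 1, fun a b => ⟨zero_le_one, le_refl 1⟩, ?_, rfl⟩
    intro a b
    unfold psi
    split
    · have hda : IsDist (T a) := by
        cases a with
        | inl x => exact sumT_dist_inl hτ x
        | inr x => exact sumT_dist_inr hθ x
      have hdb : IsDist (T b) := by
        cases b with
        | inl x => exact sumT_dist_inl hτ x
        | inr x => exact sumT_dist_inr hθ x
      rw [kant_one hda hdb, mul_one]
      exact hlam.2
    · exact le_refl 1
  · rintro r ⟨d, hb, hp, rfl⟩
    by_cases hlb : lab (Sum.inl m) = lab (Sum.inr n)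
    · -- labels equal
      have hkey : S0 ≤ kant d (T (Sum.inl m)) (T (Sum.inr n)) := by
        apply le_csInf
        · exact ⟨_, ⟨_, prod_coupling hTm hTn, rfl⟩⟩
        · rintro c ⟨ω, ⟨⟨hω0, _⟩, hω1, hω2⟩, rfl⟩
          have hzero : ∀ (x : M ⊕ N) (v : M), ω (x, Sum.inl v) = 0 := by
            intro x v
            have h2 := hω2 (Sum.inl v)
            have : T (Sum.inr n) (Sum.inl v) = 0 := rfl
            rw [this] at h2
            exact (Finset.sum_eq_zero_iff_of_nonneg (fun y _ => hω0 _)).mp h2 x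
              (Finset.mem_univ x)
          have hrow : ∀ u : M, ∑ v : N, ω (Sum.inl u, Sum.inr v) = τ m u := by
            intro u
            have h1 := hω1 (Sum.inl u)
            rw [Fintype.sum_sum_type] at h1
            have hz : ∑ v : M, ω (Sum.inl u, Sum.inl v) = 0 :=
              Finset.sum_eq_zero fun v _ => hzero _ v
            rw [hz, zero_add] at h1
            exact h1
          have hinner : ∀ u : M, Set.indicator {u : M | ℓ u ∉ Set.range α} (τ m) u
              ≤ ∑ v : N, d (Sum.inl u) (Sum.inr v) * ω (Sum.inl u, Sum.inr v) := by
            intro u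
            rw [hind]
            by_cases hu : ℓ u ∉ Set.range α
            · rw [if_pos hu, ← hrow u]
              apply Finset.sum_le_sum
              intro v _
              have hne : lab (Sum.inl u) ≠ lab (Sum.inr v) := by
                simp only [hlab, sumL]
                intro h; exact hu ⟨v, h.symm⟩
              have hpd := hp (Sum.inl u) (Sum.inr v)
              rw [psi, if_neg hne] at hpd
              exact le_mul_of_one_le_left (hω0 _) hpd
            · rw [if_neg hu]
              exact Finset.sum_nonneg fun v _ =>
                mul_nonneg (hb _ _).1 (hω0 _)
          calc S0 ≤ ∑ u : M, ∑ v : N,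
                d (Sum.inl u) (Sum.inr v) * ω (Sum.inl u, Sum.inr v) :=
                Finset.sum_le_sum fun u _ => hinner u
            _ ≤ ∑ p : (M ⊕ N) × (M ⊕ N), d p.1 p.2 * ω p := by
                rw [Fintype.sum_prod_type, Fintype.sum_sum_type]
                have h1 : ∀ u : M, ∑ v : N, d (Sum.inl u) (Sum.inr v) * ω (Sum.inl u, Sum.inr v)
                    ≤ ∑ y : M ⊕ N, d (Sum.inl u) y * ω (Sum.inl u, y) := by
                  intro u
                  rw [Fintype.sum_sum_type]
                  have : (0:ℝ) ≤ ∑ v : M, d (Sum.inl u) (Sum.inl v) * ω (Sum.inl u, Sum.inl v) :=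
                    Finset.sum_nonneg fun v _ => mul_nonneg (hb _ _).1 (hω0 _)
                  linarith
                have h2 : (0:ℝ) ≤ ∑ v : N, ∑ y : M ⊕ N, d (Sum.inr v) y * ω (Sum.inr v, y) :=
                  Finset.sum_nonneg fun v _ => Finset.sum_nonneg fun y _ =>
                    mul_nonneg (hb _ _).1 (hω0 _)
                have h3 := Finset.sum_le_sum (fun u (_ : u ∈ Finset.univ) => h1 u)
                linarith
      have hpd := hp (Sum.inl m) (Sum.inr n)
      rw [psi, if_pos hlb] at hpd
      calc lam * S0 ≤ lam * kant d (T (Sum.inl m)) (T (Sum.inr n)) :=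
            mul_le_mul_of_nonneg_left hkey (le_of_lt hlam.1)
        _ ≤ d (Sum.inl m) (Sum.inr n) := hpd
    · -- labels differ
      have hpd := hp (Sum.inl m) (Sum.inr n)
      rw [psi, if_neg hlb] at hpd
      calc lam * S0 ≤ 1 := mul_le_one₀ hlam.2 hS0nonneg hS0le
        _ ≤ d (Sum.inl m) (Sum.inr n) := hpd
end

section
/- Let C be a coupling structure for the disjoint union of Markov chains M and N, λ ∈ (0,1], and let β_λ^C be the least fixed point of B_λ^C(d)(m,n) = 1 if γ_λ^C(m,n)=0, 0 if ℓ(m)≠α(n), and (1−λ)+λ·∑_{u,v} d(u,v)·C(m,n)(u,v) otherwise. Then β_λ^C(m,n) = 1 − γ_λ^C(m,n) for all states m of M and n of N. -/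
open Finset

def IsCoupling2 {M N : Type*} [Fintype M] [Fintype N] (μ : M → ℝ) (ν : N → ℝ)
    (ω : M × N → ℝ) : Prop :=
  (∀ p, 0 ≤ ω p) ∧ (∀ x, ∑ y, ω (x, y) = μ x) ∧ (∀ y, ∑ x, ω (x, y) = ν y)

open Classical in
noncomputable def gammaMN {M N L : Type*} [Fintype M] [Fintype N] (lam : ℝ)
    (ℓ : M → L) (α : N → L) (C : M → N → (M × N → ℝ)) (d : M → N → ℝ) : M → N → ℝ :=
  fun m n => if ℓ m = α n then lam * ∑ p : M × N, d p.1 p.2 * C m n p else 1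

open Classical in
noncomputable def bOp {M N L : Type*} [Fintype M] [Fintype N] (lam : ℝ)
    (ℓ : M → L) (α : N → L) (C : M → N → (M × N → ℝ)) (g : M → N → ℝ)
    (d : M → N → ℝ) : M → N → ℝ :=
  fun m n =>
    if g m n = 0 then 1
    else if ℓ m = α n then (1 - lam) + lam * ∑ p : M × N, d p.1 p.2 * C m n p
    else 0

theorem stmt13 {M N L : Type*} [Fintype M] [Nonempty M] [Fintype N] [Nonempty N]
    (lam : ℝ) (hlam : 0 < lam ∧ lam ≤ 1)
    (τ : M → M → ℝ) (hτ : ∀ m, IsDist (τ m)) (ℓ : M → L)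
    (θ : N → N → ℝ) (hθ : ∀ n, IsDist (θ n)) (α : N → L)
    (C : M → N → (M × N → ℝ)) (hC : ∀ m n, IsCoupling2 (τ m) (θ n) (C m n))
    (g : M → N → ℝ)
    (hgb : ∀ m n, 0 ≤ g m n ∧ g m n ≤ 1)
    (hgfix : gammaMN lam ℓ α C g = g)
    (hgleast : ∀ g' : M → N → ℝ, (∀ m n, 0 ≤ g' m n ∧ g' m n ≤ 1) →
        gammaMN lam ℓ α C g' = g' → ∀ m n, g m n ≤ g' m n)
    (b : M → N → ℝ)
    (hbb : ∀ m n, 0 ≤ b m n ∧ b m n ≤ 1)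
    (hbfix : bOp lam ℓ α C g b = b)
    (hbleast : ∀ b' : M → N → ℝ, (∀ m n, 0 ≤ b' m n ∧ b' m n ≤ 1) →
        bOp lam ℓ α C g b' = b' → ∀ m n, b m n ≤ b' m n) :
    ∀ m n, b m n = 1 - g m n := by
  classical
  obtain ⟨hl0, hl1⟩ := hlam
  -- total mass of each coupling is 1
  have hCsum : ∀ m n, ∑ p : M × N, C m n p = 1 := by
    intro m n
    rw [Fintype.sum_prod_type]
    calc ∑ x, ∑ y, C m n (x, y) = ∑ x, τ m x :=
          Finset.sum_congr rfl fun x _ => (hC m n).2.1 x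
      _ = 1 := (hτ m).2
  have hCnn : ∀ m n p, 0 ≤ C m n p := fun m n => (hC m n).1
  have hgpt : ∀ m n, gammaMN lam ℓ α C g m n = g m n := fun m n => by rw [hgfix]
  have hbpt : ∀ m n, bOp lam ℓ α C g b m n = b m n := fun m n => by rw [hbfix]
  -- pointwise facts
  have hg1 : ∀ m n, ℓ m ≠ α n → g m n = 1 := by
    intro m n h
    have := hgpt m n
    simp only [gammaMN, if_neg h] at this
    exact this.symm
  have hgrec : ∀ m n, ℓ m = α n → g m n = lam * ∑ p : M × N, g p.1 p.2 * C m n p := by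
    intro m n h
    have := hgpt m n
    simp only [gammaMN, if_pos h] at this
    exact this.symm
  have hbeq1 : ∀ m n, g m n = 0 → b m n = 1 := by
    intro m n h
    have := hbpt m n
    simp only [bOp, if_pos h] at this
    exact this.symm
  have hb0 : ∀ m n, ℓ m ≠ α n → b m n = 0 := by
    intro m n h
    have hg : g m n ≠ 0 := by rw [hg1 m n h]; norm_num
    have := hbpt m n
    simp only [bOp, if_neg hg, if_neg h] at this
    exact this.symm
  have hbrec : ∀ m n, g m n ≠ 0 → ℓ m = α n →
      b m n = (1 - lam) + lam * ∑ p : M × N, b p.1 p.2 * C m n p := by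
    intro m n hg h
    have := hbpt m n
    simp only [bOp, if_neg hg, if_pos h] at this
    exact this.symm
  -- 1 - g is a fixed point of bOp, hence b ≤ 1 - g
  have hfix' : bOp lam ℓ α C g (fun m n => 1 - g m n) = fun m n => 1 - g m n := by
    funext m n
    simp only [bOp]
    split_ifs with h1 h2
    · rw [h1]; ring
    · have hsum : ∑ p : M × N, (1 - g p.1 p.2) * C m n p
          = (∑ p : M × N, C m n p) - ∑ p : M × N, g p.1 p.2 * C m n p := by
        rw [← Finset.sum_sub_distrib]
        exact Finset.sum_congr rfl fun p _ => by ring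
      rw [hsum, hCsum m n]
      have := hgrec m n h2
      linarith [this]
    · have := hg1 m n h2
      linarith
  have hble : ∀ m n, b m n ≤ 1 - g m n := by
    refine hbleast _ (fun m n => ?_) hfix'
    obtain ⟨h1, h2⟩ := hgb m n
    constructor <;> linarith
  set f : M → N → ℝ := fun m n => 1 - g m n - b m n with hfdef
  have hfge : ∀ m n, 0 ≤ f m n := fun m n => by
    have := hble m n; simp only [hfdef]; linarith
  have hf0ne : ∀ m n, ℓ m ≠ α n → f m n = 0 := by
    intro m n h
    simp only [hfdef]
    rw [hg1 m n h, hb0 m n h]; ring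
  have hfg0 : ∀ m n, g m n = 0 → f m n = 0 := by
    intro m n h
    simp only [hfdef]
    rw [h, hbeq1 m n h]; ring
  -- if g m n = 0 then the f-expectation vanishes
  have hsumf0 : ∀ m n, g m n = 0 → ∑ p : M × N, f p.1 p.2 * C m n p = 0 := by
    intro m n h
    have hl : ℓ m = α n := by
      by_contra hc
      rw [hg1 m n hc] at h; norm_num at h
    have hz : ∑ p : M × N, g p.1 p.2 * C m n p = 0 := by
      have := hgrec m n hl
      rw [h] at this
      have hlam' : lam ≠ 0 := ne_of_gt hl0
      replace this := mul_eq_zero.mp this.symm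
      rcases this with h' | h'
      · exact absurd h' hlam'
      · exact h'
    have hterm : ∀ p ∈ (Finset.univ : Finset (M × N)), g p.1 p.2 * C m n p = 0 := by
      rw [← Finset.sum_eq_zero_iff_of_nonneg]
      · exact hz
      · intro p _
        exact mul_nonneg (hgb p.1 p.2).1 (hCnn m n p)
    refine Finset.sum_eq_zero fun p _ => ?_
    rcases mul_eq_zero.mp (hterm p (Finset.mem_univ p)) with hgp | hcp
    · rw [hfg0 p.1 p.2 hgp]; ring
    · rw [hcp]; ring
  -- recursion for f on matching labels
  have hfrec : ∀ m n, ℓ m = α n → f m n = lam * ∑ p : M × N, f p.1 p.2 * C m n p := by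
    intro m n h
    by_cases hg : g m n = 0
    · rw [hfg0 m n hg, hsumf0 m n hg]; ring
    · have e1 : ∑ p : M × N, f p.1 p.2 * C m n p
          = (∑ p : M × N, C m n p) - (∑ p : M × N, g p.1 p.2 * C m n p)
            - ∑ p : M × N, b p.1 p.2 * C m n p := by
        rw [← Finset.sum_sub_distrib, ← Finset.sum_sub_distrib]
        refine Finset.sum_congr rfl fun p _ => ?_
        simp only [hfdef]; ring
      have hgr := hgrec m n h
      have hbr := hbrec m n hg h
      simp only [hfdef]
      rw [e1, hCsum m n]
      linarith [hgr, hbr]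
  -- main argument: f = 0 everywhere
  have hfzero : ∀ m n, f m n = 0 := by
    by_cases hS : (Finset.univ.filter (fun p : M × N => 0 < f p.1 p.2)).Nonempty
    · -- choose ε
      set S := Finset.univ.filter (fun p : M × N => 0 < f p.1 p.2) with hSdef
      set ε := S.inf' hS (fun p => g p.1 p.2 / f p.1 p.2) with hεdef
      have hε0 : 0 < ε := by
        rw [hεdef, Finset.lt_inf'_iff]
        intro p hp
        have hfp : 0 < f p.1 p.2 := (Finset.mem_filter.mp hp).2
        have hgp : 0 < g p.1 p.2 := by
          rcases lt_or_eq_of_le (hgb p.1 p.2).1 with h' | h'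
          · exact h'
          · exfalso
            have := hfg0 p.1 p.2 h'.symm
            rw [this] at hfp; exact lt_irrefl 0 hfp
        exact div_pos hgp hfp
      have hεf : ∀ m n, ε * f m n ≤ g m n := by
        intro m n
        rcases lt_or_eq_of_le (hfge m n) with h' | h'
        · have hp : (m, n) ∈ S := by
            rw [hSdef]; simp [h']
          have := Finset.inf'_le (fun p : M × N => g p.1 p.2 / f p.1 p.2) hp
          have hne : f m n ≠ 0 := ne_of_gt h'
          calc ε * f m n ≤ (g m n / f m n) * f m n := by
                apply mul_le_mul_of_nonneg_right _ (le_of_lt h')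
                exact this
            _ = g m n := div_mul_cancel₀ _ hne
        · rw [← h']; simpa using (hgb m n).1
      -- g - ε f is a fixed point of gammaMN
      set g' : M → N → ℝ := fun m n => g m n - ε * f m n with hg'def
      have hg'fix : gammaMN lam ℓ α C g' = g' := by
        funext m n
        simp only [gammaMN, hg'def]
        split_ifs with h
        · have e1 : ∑ p : M × N, (g p.1 p.2 - ε * f p.1 p.2) * C m n p
              = (∑ p : M × N, g p.1 p.2 * C m n p)
                - ε * ∑ p : M × N, f p.1 p.2 * C m n p := by
            rw [Finset.mul_sum, ← Finset.sum_sub_distrib]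
            exact Finset.sum_congr rfl fun p _ => by ring
          rw [e1]
          have hgr := hgrec m n h
          have hfr := hfrec m n h
          linear_combination -hgr + ε * hfr
        · rw [hg1 m n h, hf0ne m n h]; ring
      have hg'b : ∀ m n, 0 ≤ g' m n ∧ g' m n ≤ 1 := by
        intro m n
        have h1 := hεf m n
        have h2 : 0 ≤ ε * f m n := mul_nonneg (le_of_lt hε0) (hfge m n)
        have h3 := (hgb m n).2
        constructor <;> simp only [hg'def] <;> linarith
      have hle := hgleast g' hg'b hg'fix
      intro m n
      have := hle m n
      simp only [hg'def] at this
      have h2 : 0 ≤ ε * f m n := mul_nonneg (le_of_lt hε0) (hfge m n)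
      have h3 : ε * f m n = 0 := by linarith
      rcases mul_eq_zero.mp h3 with h' | h'
      · exact absurd h' (ne_of_gt hε0)
      · exact h'
    · intro m n
      have : (m, n) ∉ Finset.univ.filter (fun p : M × N => 0 < f p.1 p.2) := by
        intro hc; exact hS ⟨(m, n), hc⟩
      simp only [Finset.mem_filter, Finset.mem_univ, true_and, not_lt] at this
      linarith [hfge m n]
  intro m n
  have := hfzero m n
  simp only [hfdef] at this
  linarith
end

section
/- Two states m, n of a Markov chain M satisfy d_λ(m,n) = 0 if there exists a coupling structure C for M such that the pair (m,n) cannot reach, in the directed graph on M×M with edges given by the supports of C, any pair of states with different labels. -/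
open Finset

theorem stmt15 {M L : Type*} [Fintype M] [Nonempty M]
    (lam : ℝ) (hlam : 0 < lam ∧ lam ≤ 1)
    (τ : M → M → ℝ) (hτ : ∀ m, IsDist (τ m)) (ℓ : M → L)
    (m n : M)
    (h : ∃ C : M → M → (M × M → ℝ),
      (∀ a b, IsCoupling (τ a) (τ b) (C a b)) ∧
      ∀ p : M × M,
        Relation.ReflTransGen (fun p q : M × M => 0 < C p.1 p.2 q) (m, n) p →
        ℓ p.1 = ℓ p.2) :
    bdist lam τ ℓ m n = 0 := by
  classical
  obtain ⟨hl0, hl1⟩ := hlam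
  obtain ⟨C, hC, hGood⟩ := h
  set Good : M → M → Prop := fun a b =>
    ∀ p : M × M, Relation.ReflTransGen (fun p q : M × M => 0 < C p.1 p.2 q) (a, b) p →
      ℓ p.1 = ℓ p.2 with hGoodDef
  set d : M → M → ℝ := fun a b => if Good a b then 0 else 1 with hddef
  have hdval : ∀ a b, d a b = if Good a b then 0 else 1 := fun a b => rfl
  have hd01 : ∀ a b, 0 ≤ d a b ∧ d a b ≤ 1 := by
    intro a b; rw [hdval]; split_ifs <;> norm_num
  have hbdd : ∀ a b, BddBelow { c | ∃ ω : M × M → ℝ, IsCoupling (τ a) (τ b) ω ∧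
      c = ∑ p : M × M, d p.1 p.2 * ω p } := by
    intro a b
    refine ⟨0, ?_⟩
    rintro c ⟨ω, hω, rfl⟩
    exact Finset.sum_nonneg fun p _ => mul_nonneg (hd01 p.1 p.2).1 (hω.1.1 p)
  have hkant_le : ∀ a b, kant d (τ a) (τ b) ≤ ∑ p : M × M, d p.1 p.2 * C a b p := by
    intro a b
    exact csInf_le (hbdd a b) ⟨C a b, hC a b, rfl⟩
  have hkant_nonneg : ∀ a b, 0 ≤ kant d (τ a) (τ b) := by
    intro a b
    apply Real.sInf_nonneg
    rintro c ⟨ω, hω, rfl⟩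
    exact Finset.sum_nonneg fun p _ => mul_nonneg (hd01 p.1 p.2).1 (hω.1.1 p)
  have hsum_le_one : ∀ a b, ∑ p : M × M, d p.1 p.2 * C a b p ≤ 1 := by
    intro a b
    calc ∑ p : M × M, d p.1 p.2 * C a b p ≤ ∑ p : M × M, C a b p := by
          apply Finset.sum_le_sum
          intro p _
          nth_rewrite 2 [← one_mul (C a b p)]
          exact mul_le_mul_of_nonneg_right (hd01 p.1 p.2).2 ((hC a b).1.1 p)
      _ = 1 := (hC a b).1.2
  have hpsi : ∀ a b, psi lam τ ℓ d a b ≤ d a b := by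
    intro a b
    by_cases hg : Good a b
    · have hlab : ℓ a = ℓ b := hg (a, b) Relation.ReflTransGen.refl
      have hsum : ∑ p : M × M, d p.1 p.2 * C a b p = 0 := by
        apply Finset.sum_eq_zero
        intro p _
        rcases lt_or_eq_of_le ((hC a b).1.1 p) with hpos | heq
        · have hgp : Good p.1 p.2 := by
            intro q hq
            exact hg q (Relation.ReflTransGen.head hpos hq)
          rw [hdval, if_pos hgp, zero_mul]
        · rw [← heq, mul_zero]
      have hk : kant d (τ a) (τ b) ≤ 0 := (hkant_le a b).trans_eq hsum
      have hle : lam * kant d (τ a) (τ b) ≤ 0 := by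
        calc lam * kant d (τ a) (τ b) ≤ lam * 0 :=
              mul_le_mul_of_nonneg_left hk hl0.le
          _ = 0 := mul_zero lam
      rw [hdval, if_pos hg, psi, if_pos hlab]
      exact hle
    · rw [hdval, if_neg hg, psi]
      split
      · calc lam * kant d (τ a) (τ b) ≤ 1 * 1 :=
              mul_le_mul hl1 ((hkant_le a b).trans (hsum_le_one a b))
                (hkant_nonneg a b) zero_le_one
          _ = 1 := one_mul 1
      · exact le_refl 1
  have hdm : d m n = 0 := by
    rw [hdval, if_pos]
    intro p hp
    exact hGood p hp
  have hmem : (0 : ℝ) ∈ { r | ∃ d' : M → M → ℝ, (∀ a b, 0 ≤ d' a b ∧ d' a b ≤ 1) ∧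
      (∀ a b, psi lam τ ℓ d' a b ≤ d' a b) ∧ r = d' m n } := ⟨d, hd01, hpsi, hdm.symm⟩
  apply le_antisymm
  · apply csInf_le _ hmem
    refine ⟨0, ?_⟩
    rintro r ⟨d', hd', _, rfl⟩
    exact (hd' m n).1
  · apply le_csInf ⟨0, hmem⟩
    rintro r ⟨d', hd', _, rfl⟩
    exact (hd' m n).1
end
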